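/- Suppose that X is a Fréchet sequence space over ℤ in which the sequence (e_n)_{n∈ℤ} of canonical vectors is a basis, that (‖·‖_k)_{k∈ℕ} is an increasing sequence of seminorms inducing the topology of X, and that the bilateral forward shift F is an invertible operator on X. Then the following assertions are equivalent: (i) F : X → X is topologically expansive; (ii) there exists k ∈ ℕ such that sup_{n∈ℕ} ‖e_n‖_k = ∞ or sup_{n∈ℕ} ‖e_{−n}‖_k = ∞; (iii) F : X → X is topologically positively expansive or F⁻¹ : X → X is topologically positively expansive. -/

import Mathlib

open Filter Topology Set
open scoped Uniformity

/-- An invertible operator `T` is topologically expansive: for each nonzero `x` there is `k`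
with `sup_{n∈ℤ} ‖Tⁿ x‖_k = ∞`. -/
def TopologicallyExpansiveSeq {𝕂 : Type*} [RCLike 𝕂] {E : Type*} [AddCommGroup E] [Module 𝕂 E]
    [TopologicalSpace E] [IsTopologicalAddGroup E]
    (p : ℕ → Seminorm 𝕂 E) (T : E ≃L[𝕂] E) : Prop :=
  ∀ x : E, x ≠ 0 → ∃ k : ℕ, ∀ R : ℝ, ∃ n : ℤ, R < p k ((T ^ n) x)

/-- An operator `T` is topologically positively expansive: for each nonzero `x` there is `k`
with `sup_{n∈ℕ} ‖Tⁿ x‖_k = ∞`. -/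
def TopologicallyPositivelyExpansiveSeq {𝕂 : Type*} [RCLike 𝕂] {E : Type*} [AddCommGroup E]
    [Module 𝕂 E] (p : ℕ → Seminorm 𝕂 E) (T : E → E) : Prop :=
  ∀ x : E, x ≠ 0 → ∃ k : ℕ, ∀ R : ℝ, ∃ n : ℕ, 1 ≤ n ∧ R < p k (T^[n] x)

lemma aux_key
    {𝕂 : Type*} [RCLike 𝕂] {E : Type*} [AddCommGroup E] [Module 𝕂 E]
    [TopologicalSpace E] [IsTopologicalAddGroup E] [ContinuousSMul 𝕂 E]
    (ι : E →ₗ[𝕂] (ℤ → 𝕂))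
    (hι_cont : ∀ j : ℤ, Continuous fun x : E => ι x j)
    (p : ℕ → Seminorm 𝕂 E) (hp : WithSeminorms p) (hmono : Monotone p)
    (hcomplete : ∀ u : ℕ → E,
      (∀ V ∈ 𝓝 (0 : E), ∃ n₀ : ℕ, ∀ m ≥ n₀, ∀ n ≥ n₀, u n - u m ∈ V) →
      ∃ x : E, Tendsto u atTop (𝓝 x))
    (e : ℤ → E)
    (hbasis : ∀ x : E, Tendsto
      (fun mn : ℕ × ℕ => ∑ j ∈ Finset.Icc (-(mn.1 : ℤ)) (mn.2 : ℤ), ι x j • e j)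
      atTop (𝓝 x)) :
    ∀ k : ℕ, ∃ (k' : ℕ) (C : ℝ), 0 < C ∧
      ∀ (m : ℤ) (y : E), ‖ι y m‖ * p k (e m) ≤ C * p k' y := by
  classical
  -- the coordinate projections as continuous linear maps
  let P : ℤ → E →L[𝕂] E := fun m =>
    { toFun := fun y => ι y m • e m
      map_add' := fun a b => by simp [add_smul]
      map_smul' := fun c a => by simp [mul_smul]
      cont := (hι_cont m).smul continuous_const }
  have hPapp : ∀ (m : ℤ) (y : E), P m y = ι y m • e m := fun _ _ => rfl
  letI : UniformSpace E := IsTopologicalAddGroup.rightUniformSpace E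
  haveI : IsUniformAddGroup E := isUniformAddGroup_of_addCommGroup
  haveI : FirstCountableTopology E := hp.firstCountableTopology
  haveI : (uniformity E).IsCountablyGenerated :=
    IsUniformAddGroup.uniformity_countably_generated
  haveI : CompleteSpace E := by
    apply UniformSpace.complete_of_cauchySeq_tendsto
    intro u hu
    apply hcomplete
    intro V hV
    have hV' : {q : E × E | q.2 - q.1 ∈ V} ∈ 𝓤 E := by
      rw [uniformity_eq_comap_nhds_zero E]
      exact preimage_mem_comap hV
    obtain ⟨N, hN⟩ := cauchySeq_iff.mp hu _ hV'
    exact ⟨N, fun m hm n hn => hN m hm n hn⟩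
  haveI : BarrelledSpace 𝕂 E := inferInstance
  -- pointwise boundedness of the coordinate projections
  have hbdd : ∀ (i : ℕ) (y : E), BddAbove (range fun m : ℤ => p i ((P m) y)) := by
    intro i y
    set S : ℕ × ℕ → E := fun ab => ∑ j ∈ Finset.Icc (-(ab.1 : ℤ)) (ab.2 : ℤ), ι y j • e j
      with hSdef
    have hten : Tendsto S atTop (𝓝 y) := hbasis y
    have hcomp : ∀ f g : ℕ → ℕ, Tendsto f atTop atTop → Tendsto g atTop atTop →
        Tendsto (fun n => S (f n, g n)) atTop (𝓝 y) := by
      intro f g hf hg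
      apply hten.comp
      rw [← prod_atTop_atTop_eq]
      exact hf.prodMk hg
    have hsub1 : ∀ a b : ℕ, Finset.Icc (-(a : ℤ)) ((b : ℤ) + 1)
        = insert ((b : ℤ) + 1) (Finset.Icc (-(a : ℤ)) (b : ℤ)) := by
      intro a b; ext x; simp only [Finset.mem_Icc, Finset.mem_insert]; omega
    have hsub2 : ∀ a b : ℕ, Finset.Icc (-(a : ℤ) - 1) (b : ℤ)
        = insert (-(a : ℤ) - 1) (Finset.Icc (-(a : ℤ)) (b : ℤ)) := by
      intro a b; ext x; simp only [Finset.mem_Icc, Finset.mem_insert]; omega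
    have hpos : Tendsto (fun n : ℕ => p i (P ((n : ℤ) + 1) y)) atTop (𝓝 0) := by
      have h1 : Tendsto (fun n : ℕ => S (n + 1, n + 1) - S (n + 1, n)) atTop (𝓝 (y - y)) :=
        (hcomp _ _ (tendsto_add_atTop_nat 1) (tendsto_add_atTop_nat 1)).sub
          (hcomp _ _ (tendsto_add_atTop_nat 1) tendsto_id)
      rw [sub_self] at h1
      have heq : ∀ n : ℕ, p i (S (n + 1, n + 1) - S (n + 1, n)) = p i (P ((n : ℤ) + 1) y) := by
        intro n
        congr 1
        show (∑ j ∈ Finset.Icc (-((n + 1 : ℕ) : ℤ)) (((n + 1 : ℕ)) : ℤ), ι y j • e j)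
          - (∑ j ∈ Finset.Icc (-((n + 1 : ℕ) : ℤ)) ((n : ℕ) : ℤ), ι y j • e j) = _
        have hins : Finset.Icc (-((n + 1 : ℕ) : ℤ)) ((n + 1 : ℕ) : ℤ)
            = insert ((n : ℤ) + 1) (Finset.Icc (-((n + 1 : ℕ) : ℤ)) ((n : ℕ) : ℤ)) := by
          ext x; simp only [Finset.mem_Icc, Finset.mem_insert]; omega
        rw [hins, Finset.sum_insert (by simp only [Finset.mem_Icc]; omega)]
        rw [hPapp]
        abel
      have h2 : Tendsto (fun n : ℕ => p i (S (n + 1, n + 1) - S (n + 1, n))) atTop (𝓝 0) := by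
        have h3 := ((hp.continuous_seminorm i).tendsto 0).comp h1
        rw [map_zero] at h3
        exact h3
      exact (tendsto_congr heq).mp h2
    have hneg : Tendsto (fun n : ℕ => p i (P (-(n : ℤ) - 1) y)) atTop (𝓝 0) := by
      have h1 : Tendsto (fun n : ℕ => S (n + 1, n) - S (n, n)) atTop (𝓝 (y - y)) :=
        (hcomp _ _ (tendsto_add_atTop_nat 1) tendsto_id).sub
          (hcomp _ _ tendsto_id tendsto_id)
      rw [sub_self] at h1
      have heq : ∀ n : ℕ, p i (S (n + 1, n) - S (n, n)) = p i (P (-(n : ℤ) - 1) y) := by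
        intro n
        congr 1
        show (∑ j ∈ Finset.Icc (-((n + 1 : ℕ) : ℤ)) ((n : ℕ) : ℤ), ι y j • e j)
          - (∑ j ∈ Finset.Icc (-((n : ℕ) : ℤ)) ((n : ℕ) : ℤ), ι y j • e j) = _
        have hins : Finset.Icc (-((n + 1 : ℕ) : ℤ)) ((n : ℕ) : ℤ)
            = insert (-(n : ℤ) - 1) (Finset.Icc (-((n : ℕ) : ℤ)) ((n : ℕ) : ℤ)) := by
          ext x; simp only [Finset.mem_Icc, Finset.mem_insert]; omega
        rw [hins, Finset.sum_insert (by simp only [Finset.mem_Icc]; omega)]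
        rw [hPapp]
        abel
      have h2 : Tendsto (fun n : ℕ => p i (S (n + 1, n) - S (n, n))) atTop (𝓝 0) := by
        have h3 := ((hp.continuous_seminorm i).tendsto 0).comp h1
        rw [map_zero] at h3
        exact h3
      exact (tendsto_congr heq).mp h2
    obtain ⟨B1, hB1⟩ := hpos.bddAbove_range
    obtain ⟨B2, hB2⟩ := hneg.bddAbove_range
    refine ⟨max (max B1 B2) (p i (P 0 y)), ?_⟩
    rintro r ⟨m, rfl⟩
    match m with
    | Int.ofNat 0 =>
      exact le_max_right _ _
    | Int.ofNat (n + 1) =>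
      have hmem : p i (P ((n : ℤ) + 1) y) ∈ range fun n : ℕ => p i (P ((n : ℤ) + 1) y) :=
        ⟨n, rfl⟩
      have : p i (P ((n : ℤ) + 1) y) ≤ B1 := hB1 hmem
      have hc : (Int.ofNat (n + 1) : ℤ) = (n : ℤ) + 1 := by simp
      rw [hc]
      exact le_trans this (le_trans (le_max_left _ _) (le_max_left _ _))
    | Int.negSucc n =>
      have hmem : p i (P (-(n : ℤ) - 1) y) ∈ range fun n : ℕ => p i (P (-(n : ℤ) - 1) y) :=
        ⟨n, rfl⟩
      have : p i (P (-(n : ℤ) - 1) y) ≤ B2 := hB2 hmem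
      have hc : (Int.negSucc n : ℤ) = -(n : ℤ) - 1 := by
        rw [Int.negSucc_eq]; ring
      rw [hc]
      exact le_trans this (le_trans (le_max_right _ _) (le_max_left _ _))
  -- Banach–Steinhaus
  have hequi : UniformEquicontinuous ((↑) ∘ P) := hp.banach_steinhaus hbdd
  have hequi' := (hp.uniformEquicontinuous_iff_exists_continuous_seminorm
      (fun m => (P m).toLinearMap)).mp hequi
  intro k
  obtain ⟨q, hq_cont, hq_le⟩ := hequi' k
  obtain ⟨s, C, hC0, hle⟩ := Seminorm.bound_of_continuous hp q hq_cont
  refine ⟨s.sup id, max (C : ℝ) 1, lt_max_of_lt_right one_pos, fun m y => ?_⟩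
  have h1 : p k ((P m) y) ≤ q y := by
    have := hq_le m
    rw [Seminorm.le_def] at this
    simpa [Seminorm.comp_apply] using this y
  have h2 : q y ≤ (C : ℝ) * (s.sup p) y := by
    have := hle
    rw [Seminorm.le_def] at this
    simpa [NNReal.smul_def] using this y
  have h3 : (s.sup p) y ≤ p (s.sup id) y := by
    have hs : s.sup p ≤ p (s.sup id) :=
      Finset.sup_le fun i hi => hmono (Finset.le_sup (f := id) hi)
    exact Seminorm.le_def.mp hs y
  have h4 : ‖ι y m‖ * p k (e m) = p k ((P m) y) := by
    rw [hPapp, map_smul_eq_mul]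
  rw [h4]
  calc p k ((P m) y) ≤ q y := h1
    _ ≤ (C : ℝ) * (s.sup p) y := h2
    _ ≤ (C : ℝ) * p (s.sup id) y :=
        mul_le_mul_of_nonneg_left h3 C.coe_nonneg
    _ ≤ max (C : ℝ) 1 * p (s.sup id) y :=
        mul_le_mul_of_nonneg_right (le_max_left _ _) (apply_nonneg _ _)

/-- Let `X` be a Fréchet sequence space over `ℤ` (realized by a continuous-in-each-coordinate
injective linear embedding `ι : X → 𝕂^ℤ`, with a complete metrizable locally convex topology
induced by the increasing sequence of seminorms `p`), in which the canonical vectors `(e_n)`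
form a basis, and suppose the bilateral forward shift `F` is an invertible operator on `X`.
Then the following are equivalent: (i) `F` is topologically expansive; (ii) there is `k` with
`sup_n ‖e_n‖_k = ∞` or `sup_n ‖e_{−n}‖_k = ∞`; (iii) `F` or `F⁻¹` is topologically positively
expansive. -/
theorem bilateralShift_topologicallyExpansive_iff
    {𝕂 : Type*} [RCLike 𝕂] {E : Type*} [AddCommGroup E] [Module 𝕂 E]
    [TopologicalSpace E] [IsTopologicalAddGroup E] [ContinuousSMul 𝕂 E] [T2Space E]
    (ι : E →ₗ[𝕂] (ℤ → 𝕂)) (hι_inj : Function.Injective ι)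
    (hι_cont : ∀ j : ℤ, Continuous fun x : E => ι x j)
    (p : ℕ → Seminorm 𝕂 E) (hp : WithSeminorms p) (hmono : Monotone p)
    (hcomplete : ∀ u : ℕ → E,
      (∀ V ∈ 𝓝 (0 : E), ∃ n₀ : ℕ, ∀ m ≥ n₀, ∀ n ≥ n₀, u n - u m ∈ V) →
      ∃ x : E, Tendsto u atTop (𝓝 x))
    (e : ℤ → E) (he : ∀ n j : ℤ, ι (e n) j = if j = n then 1 else 0)
    (hbasis : ∀ x : E, Tendsto
      (fun mn : ℕ × ℕ => ∑ j ∈ Finset.Icc (-(mn.1 : ℤ)) (mn.2 : ℤ), ι x j • e j)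
      atTop (𝓝 x))
    (F : E ≃L[𝕂] E) (hF : ∀ (x : E) (n : ℤ), ι (F x) n = ι x (n - 1)) :
    (TopologicallyExpansiveSeq p F ↔
      ∃ k : ℕ, (∀ R : ℝ, ∃ n : ℕ, 1 ≤ n ∧ R < p k (e (n : ℤ))) ∨
        (∀ R : ℝ, ∃ n : ℕ, 1 ≤ n ∧ R < p k (e (-(n : ℤ))))) ∧
    ((∃ k : ℕ, (∀ R : ℝ, ∃ n : ℕ, 1 ≤ n ∧ R < p k (e (n : ℤ))) ∨
        (∀ R : ℝ, ∃ n : ℕ, 1 ≤ n ∧ R < p k (e (-(n : ℤ))))) ↔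
      (TopologicallyPositivelyExpansiveSeq p (⇑F) ∨
        TopologicallyPositivelyExpansiveSeq p (⇑F.symm))) := by
  classical
  simp only [TopologicallyExpansiveSeq, TopologicallyPositivelyExpansiveSeq]
  have key := aux_key ι hι_cont p hp hmono hcomplete e hbasis
  -- basic coordinate computations
  have he_ne : ∀ m : ℤ, e m ≠ 0 := by
    intro m h
    have h1 := he m m
    rw [h, map_zero] at h1
    simp at h1
  have hFinv : ∀ (x : E) (n : ℤ), ι (F.symm x) n = ι x (n + 1) := by
    intro x n
    have h := hF (F.symm x) (n + 1)
    rw [F.apply_symm_apply] at h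
    simpa using h.symm
  have hiterF : ∀ (n : ℕ) (x : E) (j : ℤ), ι (F^[n] x) j = ι x (j - n) := by
    intro n
    induction n with
    | zero => intro x j; simp
    | succ n ih =>
      intro x j
      rw [Function.iterate_succ_apply', hF, ih]
      congr 1
      push_cast
      ring
  have hiterB : ∀ (n : ℕ) (x : E) (j : ℤ), ι (F.symm^[n] x) j = ι x (j + n) := by
    intro n
    induction n with
    | zero => intro x j; simp
    | succ n ih =>
      intro x j
      rw [Function.iterate_succ_apply', hFinv, ih]
      congr 1
      push_cast
      ring
  have hzpow : ∀ (n : ℤ) (x : E) (j : ℤ), ι ((F ^ n) x) j = ι x (j - n) := by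
    intro n
    induction n using Int.induction_on with
    | zero =>
      intro x j
      rw [zpow_zero]
      show ι x j = ι x (j - 0)
      rw [sub_zero]
    | succ k ih =>
      intro x j
      have hstep : (F ^ ((k : ℤ) + 1)) x = (F ^ (k : ℤ)) (F x) := by
        rw [zpow_add_one]; rfl
      rw [hstep, ih, hF]
      congr 1
      ring
    | pred k ih =>
      intro x j
      have hstep : (F ^ (-(k : ℤ) - 1)) x = (F ^ (-(k : ℤ))) (F.symm x) := by
        rw [zpow_sub_one]; rfl
      rw [hstep, ih, hFinv]
      congr 1
      ring
  have hiter_eq_zpow : ∀ (n : ℕ) (x : E), F^[n] x = (F ^ (n : ℤ)) x := by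
    intro n x
    apply hι_inj
    funext j
    rw [hiterF, hzpow]
  have hsymm_iter_eq_zpow : ∀ (n : ℕ) (x : E), F.symm^[n] x = (F ^ (-(n : ℤ))) x := by
    intro n x
    apply hι_inj
    funext j
    rw [hiterB, hzpow, sub_neg_eq_add]
  have hFe_iter : ∀ (n : ℕ), F^[n] (e 0) = e (n : ℤ) := by
    intro n
    apply hι_inj
    funext j
    rw [hiterF, he, he]
    exact if_congr (by omega) rfl rfl
  have hFe_symm : ∀ (n : ℕ), F.symm^[n] (e 0) = e (-(n : ℤ)) := by
    intro n
    apply hι_inj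
    funext j
    rw [hiterB, he, he]
    exact if_congr (by omega) rfl rfl
  have hFe_zpow : ∀ (n : ℤ), (F ^ n) (e 0) = e n := by
    intro n
    apply hι_inj
    funext j
    rw [hzpow, he, he]
    exact if_congr (by omega) rfl rfl
  have hnonzero_coord : ∀ x : E, x ≠ 0 → ∃ j, ι x j ≠ 0 := by
    intro x hx
    by_contra h
    push_neg at h
    apply hx
    apply hι_inj
    funext j
    simp [h j]
  -- an unbounded set of seminorm values must be unbounded along arbitrarily large indices
  have tail : ∀ (k : ℕ) (g : ℕ → E), (∀ R, ∃ n, 1 ≤ n ∧ R < p k (g n)) →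
      ∀ (N : ℕ) (t : ℝ), ∃ n, N ≤ n ∧ 1 ≤ n ∧ t < p k (g n) := by
    intro k g hA N t
    have hne : (Finset.range (N + 1)).Nonempty := ⟨0, by simp⟩
    set M := (Finset.range (N + 1)).sup' hne (fun n => p k (g n)) with hM
    obtain ⟨n, hn1, hn⟩ := hA (max t M)
    rcases le_or_gt N n with h | h
    · exact ⟨n, h, hn1, lt_of_le_of_lt (le_max_left _ _) hn⟩
    · exfalso
      have h1 : p k (g n) ≤ M :=
        Finset.le_sup' (fun n => p k (g n)) (Finset.mem_range.mpr (by omega))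
      have h2 : M ≤ max t M := le_max_right _ _
      linarith
  -- (ii) → (iii)
  have h_ii_iii : (∃ k : ℕ, (∀ R : ℝ, ∃ n : ℕ, 1 ≤ n ∧ R < p k (e (n : ℤ))) ∨
        (∀ R : ℝ, ∃ n : ℕ, 1 ≤ n ∧ R < p k (e (-(n : ℤ))))) →
      (TopologicallyPositivelyExpansiveSeq p (⇑F) ∨
        TopologicallyPositivelyExpansiveSeq p (⇑F.symm)) := by
    rintro ⟨k, hk | hk⟩
    · left
      intro x hx
      obtain ⟨j₀, hj₀⟩ := hnonzero_coord x hx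
      obtain ⟨k', C, hC, hkey⟩ := key k
      have hc : 0 < ‖ι x j₀‖ := norm_pos_iff.mpr hj₀
      refine ⟨k', fun R => ?_⟩
      obtain ⟨n', hn'N, hn'1, hn'⟩ :=
        tail k (fun n => e (n : ℤ)) hk (j₀.natAbs + 1) (R * C / ‖ι x j₀‖)
      have hj₀n : j₀ + 1 ≤ (n' : ℤ) := by
        have h1 : (j₀.natAbs : ℤ) + 1 ≤ (n' : ℤ) := by exact_mod_cast hn'N
        have h2 : j₀ ≤ |j₀| := le_abs_self j₀
        rw [Int.abs_eq_natAbs] at h2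
        linarith
      set nn : ℕ := ((n' : ℤ) - j₀).toNat with hnn
      have hnnz : (nn : ℤ) = (n' : ℤ) - j₀ := Int.toNat_of_nonneg (by linarith)
      refine ⟨nn, by omega, ?_⟩
      have hcoord : ι (F^[nn] x) ((n' : ℤ)) = ι x j₀ := by
        rw [hiterF, hnnz]
        congr 1
        ring
      have hineq := hkey (n' : ℤ) (F^[nn] x)
      rw [hcoord] at hineq
      -- R * C < ‖ι x j₀‖ * p k (e n') ≤ C * p k' (F^[nn] x)
      have h1 : R * C < ‖ι x j₀‖ * p k (e (n' : ℤ)) := by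
        rw [div_lt_iff₀ hc] at hn'
        nlinarith
      have h2 : R * C < C * p k' (F^[nn] x) := lt_of_lt_of_le h1 hineq
      nlinarith
    · right
      intro x hx
      obtain ⟨j₀, hj₀⟩ := hnonzero_coord x hx
      obtain ⟨k', C, hC, hkey⟩ := key k
      have hc : 0 < ‖ι x j₀‖ := norm_pos_iff.mpr hj₀
      refine ⟨k', fun R => ?_⟩
      obtain ⟨n', hn'N, hn'1, hn'⟩ :=
        tail k (fun n => e (-(n : ℤ))) hk (j₀.natAbs + 1) (R * C / ‖ι x j₀‖)
      have hj₀n : -j₀ + 1 ≤ (n' : ℤ) := by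
        have h1 : (j₀.natAbs : ℤ) + 1 ≤ (n' : ℤ) := by exact_mod_cast hn'N
        have h2 : -j₀ ≤ |j₀| := neg_le_abs j₀
        rw [Int.abs_eq_natAbs] at h2
        linarith
      set nn : ℕ := ((n' : ℤ) + j₀).toNat with hnn
      have hnnz : (nn : ℤ) = (n' : ℤ) + j₀ := Int.toNat_of_nonneg (by linarith)
      refine ⟨nn, by omega, ?_⟩
      have hcoord : ι (F.symm^[nn] x) (-(n' : ℤ)) = ι x j₀ := by
        rw [hiterB, hnnz]
        congr 1
        ring
      have hineq := hkey (-(n' : ℤ)) (F.symm^[nn] x)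
      rw [hcoord] at hineq
      have h1 : R * C < ‖ι x j₀‖ * p k (e (-(n' : ℤ))) := by
        rw [div_lt_iff₀ hc] at hn'
        nlinarith
      have h2 : R * C < C * p k' (F.symm^[nn] x) := lt_of_lt_of_le h1 hineq
      nlinarith
  -- (iii) → (i)
  have h_iii_i : (TopologicallyPositivelyExpansiveSeq p (⇑F) ∨
        TopologicallyPositivelyExpansiveSeq p (⇑F.symm)) →
      TopologicallyExpansiveSeq p F := by
    rintro (h | h) x hx
    · obtain ⟨k, hk⟩ := h x hx
      refine ⟨k, fun R => ?_⟩
      obtain ⟨n, _, hn⟩ := hk R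
      exact ⟨(n : ℤ), by rwa [← hiter_eq_zpow]⟩
    · obtain ⟨k, hk⟩ := h x hx
      refine ⟨k, fun R => ?_⟩
      obtain ⟨n, _, hn⟩ := hk R
      exact ⟨-(n : ℤ), by rwa [← hsymm_iter_eq_zpow]⟩
  -- (i) → (ii)
  have h_i_ii : TopologicallyExpansiveSeq p F →
      ∃ k : ℕ, (∀ R : ℝ, ∃ n : ℕ, 1 ≤ n ∧ R < p k (e (n : ℤ))) ∨
        (∀ R : ℝ, ∃ n : ℕ, 1 ≤ n ∧ R < p k (e (-(n : ℤ)))) := by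
    intro hT
    by_contra hC
    push_neg at hC
    obtain ⟨k, hk⟩ := hT (e 0) (he_ne 0)
    obtain ⟨⟨R1, hR1⟩, ⟨R2, hR2⟩⟩ := hC k
    obtain ⟨n, hn⟩ := hk (max (max R1 R2) (p k (e 0)))
    rw [hFe_zpow] at hn
    rcases lt_trichotomy n 0 with h | h | h
    · have h1 := hR2 (-n).toNat (by omega)
      have hcast : (-(((-n).toNat : ℕ) : ℤ)) = n := by omega
      rw [hcast] at h1
      have := le_max_right R1 R2
      have := le_max_left (max R1 R2) (p k (e 0))
      linarith
    · subst h
      have := le_max_right (max R1 R2) (p k (e 0))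
      linarith
    · have h1 := hR1 n.toNat (by omega)
      have hcast : ((n.toNat : ℕ) : ℤ) = n := by omega
      rw [hcast] at h1
      have := le_max_left R1 R2
      have := le_max_left (max R1 R2) (p k (e 0))
      linarith
  -- (iii) → (ii)
  have h_iii_ii : (TopologicallyPositivelyExpansiveSeq p (⇑F) ∨
        TopologicallyPositivelyExpansiveSeq p (⇑F.symm)) →
      ∃ k : ℕ, (∀ R : ℝ, ∃ n : ℕ, 1 ≤ n ∧ R < p k (e (n : ℤ))) ∨
        (∀ R : ℝ, ∃ n : ℕ, 1 ≤ n ∧ R < p k (e (-(n : ℤ)))) := by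
    rintro (h | h)
    · obtain ⟨k, hk⟩ := h (e 0) (he_ne 0)
      refine ⟨k, Or.inl fun R => ?_⟩
      obtain ⟨n, hn1, hn⟩ := hk R
      exact ⟨n, hn1, by rwa [hFe_iter] at hn⟩
    · obtain ⟨k, hk⟩ := h (e 0) (he_ne 0)
      refine ⟨k, Or.inr fun R => ?_⟩
      obtain ⟨n, hn1, hn⟩ := hk R
      exact ⟨n, hn1, by rwa [hFe_symm] at hn⟩
  exact ⟨⟨h_i_ii, fun hii => h_iii_i (h_ii_iii hii)⟩, ⟨h_ii_iii, h_iii_ii⟩⟩
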